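/- Let s ≥ 1, let a : Fin s → ℝ with a i > 0 for all i, and let l be a real number with 0 ≤ l and 2l ≤ a i for all i. Suppose E ⊆ ℝ^s is an extreme subset of the chainlink polytope CL(ā,l) (i.e., IsExtreme ℝ CL(ā,l) E) and E equals the closed segment [u,v] for some u ≠ v (an edge of the polytope). Then there exist an index i ∈ Fin s and a nonzero real scalar c such that v − u = c·e_i or v − u = c·(e_i + e_{i+1 (mod s)}), where e_1,…,e_s are the standard basis vectors of ℝ^s. -/

import Mathlib

/-- The chainlink polytope `CL(ā,l) ⊆ ℝ^s` (indices taken cyclically). -/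
def chainlink (s : ℕ) [NeZero s] (a : Fin s → ℝ) (l : ℝ) : Set (Fin s → ℝ) :=
  {x | (∀ i, 0 ≤ x i ∧ x i ≤ a i) ∧ ∀ i, x i - x (i + 1) ≤ a i - l}

/-- Auxiliary: any direction `w` annihilated by all constraints that are tight at the
midpoint of the edge `[u,v]` must be a multiple of `v - u`. -/
lemma chainlink_span {s : ℕ} [NeZero s] (a : Fin s → ℝ) (l : ℝ)
    (E : Set (Fin s → ℝ)) (hE : IsExtreme ℝ (chainlink s a l) E)
    (u v : Fin s → ℝ) (hseg : E = segment ℝ u v)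
    (m : Fin s → ℝ) (hm : m = (2:ℝ)⁻¹ • (u + v))
    (hmP : m ∈ chainlink s a l)
    (w : Fin s → ℝ)
    (H1 : ∀ i, (m i = 0 ∨ m i = a i) → w i = 0)
    (H2 : ∀ i, m i - m (i+1) = a i - l → w i = w (i+1)) :
    ∃ c : ℝ, w = c • (v - u) := by
  classical
  haveI : Nonempty (Fin s) := ⟨⟨0, Nat.pos_of_ne_zero (NeZero.ne s)⟩⟩
  obtain ⟨hbox, hchain⟩ := hmP
  set W : ℝ := (Finset.univ.sup' Finset.univ_nonempty fun i => |w i|) + 1 with hWdef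
  have hW : ∀ i, |w i| ≤ W :=
    fun i => (Finset.le_sup' (fun i => |w i|) (Finset.mem_univ i)).trans
      (le_add_of_nonneg_right zero_le_one)
  have hW0 : 0 < W := by
    have h0 : (0:ℝ) ≤ |w (Classical.arbitrary (Fin s))| := abs_nonneg _
    have := (Finset.le_sup' (fun i => |w i|) (Finset.mem_univ (Classical.arbitrary (Fin s))))
    rw [hWdef]; linarith
  set g : Fin s → ℝ := fun i =>
    min (if m i = 0 then 1 else m i)
      (min (if m i = a i then 1 else a i - m i)
        (if m i - m (i+1) = a i - l then 1 else (a i - l) - (m i - m (i+1)))) with hgdef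
  have hg : ∀ i, 0 < g i := by
    intro i
    refine lt_min ?_ (lt_min ?_ ?_)
    · split_ifs with h
      · norm_num
      · exact lt_of_le_of_ne (hbox i).1 (Ne.symm h)
    · split_ifs with h
      · norm_num
      · exact sub_pos.mpr (lt_of_le_of_ne (hbox i).2 h)
    · split_ifs with h
      · norm_num
      · exact sub_pos.mpr (lt_of_le_of_ne (hchain i) h)
  set δ : ℝ := Finset.univ.inf' Finset.univ_nonempty g with hδdef
  have hδ0 : 0 < δ := by
    rw [hδdef, Finset.lt_inf'_iff]
    exact fun i _ => hg i
  have hδg : ∀ i, δ ≤ g i := fun i => Finset.inf'_le _ (Finset.mem_univ i)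
  have hδ1 : ∀ i, δ ≤ if m i = 0 then 1 else m i :=
    fun i => (hδg i).trans (min_le_left _ _)
  have hδ2 : ∀ i, δ ≤ if m i = a i then 1 else a i - m i :=
    fun i => (hδg i).trans ((min_le_right _ _).trans (min_le_left _ _))
  have hδ3 : ∀ i, δ ≤ if m i - m (i+1) = a i - l then 1 else (a i - l) - (m i - m (i+1)) :=
    fun i => (hδg i).trans ((min_le_right _ _).trans (min_le_right _ _))
  set ε : ℝ := δ / (2 * W) with hεdef
  have hε0 : 0 < ε := div_pos hδ0 (by linarith)
  have hεW : ε * W = δ / 2 := by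
    rw [hεdef]; field_simp
  have inner : ∀ w' : Fin s → ℝ,
      (∀ i, (m i = 0 ∨ m i = a i) → w' i = 0) →
      (∀ i, m i - m (i+1) = a i - l → w' i = w' (i+1)) →
      (∀ i, |w' i| ≤ W) → m + ε • w' ∈ chainlink s a l := by
    intro w' H1' H2' hW'
    have hb2 : ∀ i, ε * w' i ≤ δ / 2 ∧ -(δ/2) ≤ ε * w' i := by
      intro i
      have h1 : ε * |w' i| ≤ δ / 2 := by
        calc ε * |w' i| ≤ ε * W := by nlinarith [hW' i]
        _ = δ/2 := hεW
      have h2 : w' i ≤ |w' i| := le_abs_self _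
      have h3 : -|w' i| ≤ w' i := neg_abs_le _
      constructor <;> nlinarith [hε0.le]
    constructor
    · intro i
      simp only [Pi.add_apply, Pi.smul_apply, smul_eq_mul]
      obtain ⟨hl1, hl2⟩ := hb2 i
      constructor
      · by_cases h : m i = 0
        · rw [h, H1' i (Or.inl h)]; norm_num
        · have h' := hδ1 i; rw [if_neg h] at h'
          linarith
      · by_cases h : m i = a i
        · rw [H1' i (Or.inr h), h]; norm_num
        · have h' := hδ2 i; rw [if_neg h] at h'
          linarith
    · intro i
      simp only [Pi.add_apply, Pi.smul_apply, smul_eq_mul]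
      by_cases h : m i - m (i+1) = a i - l
      · rw [H2' i h]; linarith [h]
      · have h' := hδ3 i; rw [if_neg h] at h'
        obtain ⟨A1, A2⟩ := hb2 i
        obtain ⟨B1, B2⟩ := hb2 (i+1)
        linarith
  have hP1 := inner w H1 H2 hW
  have hP2 : m + ε • (-w) ∈ chainlink s a l :=
    inner (-w) (fun i hi => by simp [H1 i hi]) (fun i hi => by simp [H2 i hi])
      (fun i => by simpa using hW i)
  have hmE : m ∈ E := by
    rw [hseg]
    exact ⟨2⁻¹, 2⁻¹, by norm_num, by norm_num, by norm_num, by rw [hm]; module⟩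
  have hopen : m ∈ openSegment ℝ (m + ε • w) (m + ε • (-w)) :=
    ⟨2⁻¹, 2⁻¹, by norm_num, by norm_num, by norm_num, by module⟩
  have h1 := hE.2 hP1 hP2 hmE hopen
  rw [hseg] at h1
  obtain ⟨t1, t2, ht1, ht2, hts, heq⟩ := h1
  refine ⟨ε⁻¹ * (t2 - 2⁻¹), ?_⟩
  have ht1' : t1 = 1 - t2 := by linarith
  subst ht1'
  have A : ε • w = (t2 - 2⁻¹) • (v - u) := by
    rw [hm] at heq
    funext i
    have hi := congrFun heq i
    simp only [Pi.add_apply, Pi.smul_apply, Pi.sub_apply, smul_eq_mul] at hi ⊢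
    linear_combination -hi
  calc w = ε⁻¹ • (ε • w) := by rw [smul_smul, inv_mul_cancel₀ hε0.ne', one_smul]
  _ = ε⁻¹ • ((t2 - 2⁻¹) • (v-u)) := by rw [A]
  _ = (ε⁻¹ * (t2 - 2⁻¹)) • (v - u) := smul_smul _ _ _

/-- every edge of the chainlink polytope (an extreme subset that is a
closed segment between two distinct points) is parallel to a standard basis vector
`eᵢ` or to `eᵢ + e_{i+1}`, provided `2l ≤ aᵢ` for all `i`. -/
theorem chainlink_edges_directions
    (s : ℕ) [NeZero s] (a : Fin s → ℝ) (ha : ∀ i, 0 < a i)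
    (l : ℝ) (hl : 0 ≤ l) (h2l : ∀ i, 2 * l ≤ a i)
    (E : Set (Fin s → ℝ)) (hE : IsExtreme ℝ (chainlink s a l) E)
    (u v : Fin s → ℝ) (huv : u ≠ v) (hseg : E = segment ℝ u v) :
    ∃ (i : Fin s) (c : ℝ), c ≠ 0 ∧
      (v - u = c • (Pi.single i 1 : Fin s → ℝ) ∨
       v - u = c • ((Pi.single i 1 : Fin s → ℝ) + Pi.single (i + 1) 1)) := by
  classical
  have huP : u ∈ chainlink s a l := hE.1 (hseg ▸ left_mem_segment ℝ u v)
  have hvP : v ∈ chainlink s a l := hE.1 (hseg ▸ right_mem_segment ℝ u v)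
  set m : Fin s → ℝ := (2:ℝ)⁻¹ • (u + v) with hm
  have hmi : ∀ i, m i = 2⁻¹ * (u i + v i) := fun i => rfl
  set d : Fin s → ℝ := fun i => v i - u i with hd
  -- tight box constraints kill the direction
  have hd0 : ∀ i, (m i = 0 ∨ m i = a i) → d i = 0 := by
    intro i h
    obtain ⟨hu1, hu2⟩ := huP.1 i
    obtain ⟨hv1, hv2⟩ := hvP.1 i
    rcases h with h | h <;> (rw [hmi] at h; simp only [hd]; linarith)
  -- tight chain constraints equalize the direction
  have hdC : ∀ i, m i - m (i+1) = a i - l → d i = d (i+1) := by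
    intro i h
    have hu := huP.2 i
    have hv := hvP.2 i
    rw [hmi, hmi] at h
    simp only [hd]; linarith
  have hmP : m ∈ chainlink s a l := by
    constructor
    · intro i
      obtain ⟨hu1, hu2⟩ := huP.1 i
      obtain ⟨hv1, hv2⟩ := hvP.1 i
      rw [hmi]; constructor <;> linarith
    · intro i
      have hu := huP.2 i
      have hv := hvP.2 i
      rw [hmi, hmi]; linarith
  set Ct : Fin s → Prop := fun i => m i - m (i+1) = a i - l with hCt
  -- no two consecutive tight chain constraints around a nonvanishing direction
  have step1 : ∀ j : Fin s, d j ≠ 0 → Ct (j - 1) → Ct j → False := by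
    intro j hdj h1 h2
    have e1 : (j - 1) + 1 = j := sub_add_cancel j 1
    have hj1 : d (j - 1) ≠ 0 := by
      have := hdC (j-1) h1
      rw [e1] at this
      rw [this]; exact hdj
    have hjp : d (j + 1) ≠ 0 := by rw [← hdC j h2]; exact hdj
    have hA : m (j-1) ≠ a (j-1) := fun h => hj1 (hd0 _ (Or.inr h))
    have hB : m (j+1) ≠ 0 := fun h => hjp (hd0 _ (Or.inl h))
    have hA' : m (j-1) ≤ a (j-1) := (hmP.1 _).2
    have hB' : 0 ≤ m (j+1) := (hmP.1 _).1
    have h2a := h2l j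
    have h1' : m (j-1) - m j = a (j-1) - l := by
      have h1'' : m (j-1) - m ((j-1)+1) = a (j-1) - l := h1
      rwa [e1] at h1''
    have h2' : m j - m (j+1) = a j - l := h2
    have : m (j-1) < a (j-1) := lt_of_le_of_ne hA' hA
    have : 0 < m (j+1) := lt_of_le_of_ne hB' (Ne.symm hB)
    linarith
  -- a common continuation for both cases
  have key : ∀ j : Fin s, d j ≠ 0 → ¬ Ct (j - 1) →
      ∃ (i : Fin s) (c : ℝ), c ≠ 0 ∧
      (v - u = c • (Pi.single i 1 : Fin s → ℝ) ∨
       v - u = c • ((Pi.single i 1 : Fin s → ℝ) + Pi.single (i + 1) 1)) := by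
    intro j hdj hC1
    have hjT : ¬ (m j = 0 ∨ m j = a j) := fun h => hdj (hd0 j h)
    have hvu : v - u = d := by funext i; simp [hd]
    by_cases hCj : Ct j
    · -- direction e_j + e_{j+1}
      have hdj1 : d (j+1) ≠ 0 := by rw [← hdC j hCj]; exact hdj
      have hj1T : ¬ (m (j+1) = 0 ∨ m (j+1) = a (j+1)) := fun h => hdj1 (hd0 _ h)
      have hCj2 : ¬ Ct (j+1) := fun hc => step1 (j+1) hdj1 (by
        have e : j + 1 - 1 = j := add_sub_cancel_right j 1
        rw [e]; exact hCj) hc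
      set w : Fin s → ℝ := Pi.single j 1 + Pi.single (j+1) 1 with hw
      have H1 : ∀ i, (m i = 0 ∨ m i = a i) → w i = 0 := by
        intro i hi
        have e1 : i ≠ j := by rintro rfl; exact hjT hi
        have e2 : i ≠ j + 1 := by rintro rfl; exact hj1T hi
        simp [hw, Pi.single_eq_of_ne e1, Pi.single_eq_of_ne e2]
      have H2 : ∀ i, m i - m (i+1) = a i - l → w i = w (i+1) := by
        intro i hi
        by_cases e1 : i = j
        · subst e1
          by_cases h : i = i + 1
          · exact congrArg w h
          · simp [hw, Pi.single_apply, h, Ne.symm h]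
        · have e2 : i ≠ j + 1 := fun e => hCj2 (e ▸ hi)
          have e3 : i + 1 ≠ j := fun e => hC1 (eq_sub_of_add_eq e ▸ hi)
          have e4 : i + 1 ≠ j + 1 := fun e => e1 (add_right_cancel e)
          simp [hw, Pi.single_eq_of_ne e1, Pi.single_eq_of_ne e2,
            Pi.single_eq_of_ne e3, Pi.single_eq_of_ne e4]
      obtain ⟨c, hc⟩ := chainlink_span a l E hE u v hseg m hm hmP w H1 H2
      have hwj : (1:ℝ) ≤ w j := by
        simp only [hw, Pi.add_apply, Pi.single_apply]
        split_ifs <;> norm_num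
      have hc0 : c ≠ 0 := by
        rintro rfl
        rw [zero_smul] at hc
        rw [hc] at hwj
        norm_num at hwj
      refine ⟨j, c⁻¹, inv_ne_zero hc0, Or.inr ?_⟩
      rw [show (Pi.single j 1 + Pi.single (j+1) 1 : Fin s → ℝ) = w from rfl,
        hc, smul_smul, inv_mul_cancel₀ hc0, one_smul, hvu]
    · -- direction e_j
      set w : Fin s → ℝ := Pi.single j 1 with hw
      have H1 : ∀ i, (m i = 0 ∨ m i = a i) → w i = 0 := by
        intro i hi
        have e1 : i ≠ j := by rintro rfl; exact hjT hi
        simp [hw, Pi.single_eq_of_ne e1]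
      have H2 : ∀ i, m i - m (i+1) = a i - l → w i = w (i+1) := by
        intro i hi
        have e1 : i ≠ j := fun e => hCj (e ▸ hi)
        have e3 : i + 1 ≠ j := fun e => hC1 (eq_sub_of_add_eq e ▸ hi)
        simp [hw, Pi.single_eq_of_ne e1, Pi.single_eq_of_ne e3]
      obtain ⟨c, hc⟩ := chainlink_span a l E hE u v hseg m hm hmP w H1 H2
      have hwj : w j = 1 := by simp [hw]
      have hc0 : c ≠ 0 := by
        rintro rfl
        rw [zero_smul] at hc
        rw [hc] at hwj
        norm_num at hwj
      refine ⟨j, c⁻¹, inv_ne_zero hc0, Or.inl ?_⟩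
      rw [show (Pi.single j 1 : Fin s → ℝ) = w from rfl,
        hc, smul_smul, inv_mul_cancel₀ hc0, one_smul, hvu]
  -- find a coordinate where the direction is nonzero
  have hvu0 : v - u ≠ 0 := sub_ne_zero_of_ne (Ne.symm huv)
  obtain ⟨i0, hi0⟩ := Function.ne_iff.mp hvu0
  have hi0' : d i0 ≠ 0 := by simpa [hd, sub_eq_zero] using hi0
  by_cases h : Ct (i0 - 1)
  · have e1 : (i0 - 1) + 1 = i0 := sub_add_cancel i0 1
    have hdj : d (i0 - 1) ≠ 0 := by
      have := hdC (i0 - 1) h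
      rw [e1] at this
      rw [this]; exact hi0'
    exact key (i0 - 1) hdj (fun hc => step1 (i0 - 1) hdj hc h)
  · exact key i0 hi0' h
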